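/- Suppose every vertex v of T has exactly s_{|v|+1} children, where (s_n) is a bounded sequence of positive integers. Then B is bounded on H^p(T) with ‖B‖ = sup_n s_n, the set {λ ∈ ℂ : (λ^n/(s_1 s_2 ··· s_n))_n is bounded} is contained in the point spectrum of B on H^p(T), and the spectral radius of B equals lim_{m→∞} (sup_{n≥0} s_{n+1}s_{n+2}···s_{n+m})^{1/m}. In particular, if liminf_n (s_1···s_n)^{1/n} = sup_n s_n =: t, then σ(B) is the closed disk of radius t. -/

import Mathlib

open scoped BigOperators
open Classical

/-- An infinite, locally finite rooted tree, presented combinatorially via a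
parent function and a level (distance-to-root) function.  Every level is a
finite nonempty set of vertices. -/
structure HTree where
  V : Type
  root : V
  parent : V → V
  level : V → ℕ
  level_root : level root = 0
  root_of_level_zero : ∀ v, level v = 0 → v = root
  level_parent : ∀ v, v ≠ root → level (parent v) + 1 = level v
  finite_level : ∀ n : ℕ, {v : V | level v = n}.Finite
  nonempty_level : ∀ n : ℕ, {v : V | level v = n}.Nonempty

namespace HTree

variable (T : HTree)

/-- The finite set of vertices at level `n`. -/
noncomputable def levelFinset (n : ℕ) : Finset T.V := (T.finite_level n).toFinset

/-- `γ(n)`, the number of vertices at level `n`. -/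
noncomputable def gamma (n : ℕ) : ℕ := (T.levelFinset n).card

/-- The set of `m`-children of a vertex `v`. -/
noncomputable def nChildrenFinset (m : ℕ) (v : T.V) : Finset T.V :=
  (T.levelFinset (T.level v + m)).filter (fun w => T.parent^[m] w = v)

/-- `γ(m,v)`, the number of `m`-children of `v`. -/
noncomputable def numNChildren (m : ℕ) (v : T.V) : ℕ := (T.nChildrenFinset m v).card

/-- The set of children of a vertex. -/
noncomputable def childrenFinset (v : T.V) : Finset T.V := T.nChildrenFinset 1 v

/-- `γ(1,v)`, the number of children of `v`. -/
noncomputable def numChildren (v : T.V) : ℕ := T.numNChildren 1 v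

/-- `K(m,r)`, the maximal number of `m`-children among vertices at level `r`. -/
noncomputable def K (m r : ℕ) : ℕ := (T.levelFinset r).sup (fun v => T.numNChildren m v)

/-- `M_p^p(n,f)`, the `p`-th power of the `p`-th mean of `|f|` over level `n`. -/
noncomputable def Mpp (p : ℝ) (f : T.V → ℂ) (n : ℕ) : ℝ :=
  (1 / (T.gamma n : ℝ)) * ∑ v ∈ T.levelFinset n, ‖f v‖ ^ p

/-- `M_p(n,f)`, the `p`-th mean of `|f|` over level `n`. -/
noncomputable def Mp (p : ℝ) (f : T.V → ℂ) (n : ℕ) : ℝ := (T.Mpp p f n) ^ (1 / p)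

/-- Membership in the Hardy space `H^p(T)`. -/
def MemHp (p : ℝ) (f : T.V → ℂ) : Prop := ∃ C : ℝ, ∀ n : ℕ, T.Mp p f n ≤ C

/-- Membership in the little Hardy space `H^p_0(T)`. -/
def MemHp0 (p : ℝ) (f : T.V → ℂ) : Prop :=
  Filter.Tendsto (T.Mp p f) Filter.atTop (nhds 0)

/-- The `H^p` norm, `sup_n M_p(n,f)`. -/
noncomputable def Hnorm (p : ℝ) (f : T.V → ℂ) : ℝ := ⨆ n : ℕ, T.Mp p f n

/-- The forward shift `(Sf)(v) = f(parent v)`, `(Sf)(root) = 0`. -/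
noncomputable def S (f : T.V → ℂ) : T.V → ℂ := fun v => if v = T.root then 0 else f (T.parent v)

/-- The backward shift `(Bf)(v) = Σ_{w child of v} f(w)`. -/
noncomputable def B (f : T.V → ℂ) : T.V → ℂ := fun v => ∑ w ∈ T.childrenFinset v, f w

/-- An operator `A` is bounded on the subspace described by `Mem`, with the
`H^p` norm. -/
def BoundedOn (A : (T.V → ℂ) → (T.V → ℂ)) (Mem : (T.V → ℂ) → Prop) (p : ℝ) : Prop :=
  ∃ C : ℝ, 0 ≤ C ∧ ∀ f, Mem f → Mem (A f) ∧ T.Hnorm p (A f) ≤ C * T.Hnorm p f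

/-- The operator norm of `A` on the subspace described by `Mem`. -/
noncomputable def opNorm (A : (T.V → ℂ) → (T.V → ℂ)) (Mem : (T.V → ℂ) → Prop) (p : ℝ) : ℝ :=
  sInf {C : ℝ | 0 ≤ C ∧ ∀ f, Mem f → Mem (A f) ∧ T.Hnorm p (A f) ≤ C * T.Hnorm p f}

/-- Hypercyclicity of an operator `A` on the subspace described by `Mem`. -/
def Hypercyclic (A : (T.V → ℂ) → (T.V → ℂ)) (Mem : (T.V → ℂ) → Prop) (p : ℝ) : Prop :=
  ∃ f, Mem f ∧ ∀ g, Mem g → ∀ ε : ℝ, 0 < ε →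
    ∃ N : ℕ, T.Hnorm p (fun v => A^[N] f v - g v) < ε

end HTree
namespace HTree

variable (T : HTree)

lemma mem_levelFinset {v : T.V} {n : ℕ} : v ∈ T.levelFinset n ↔ T.level v = n := by
  simp [levelFinset, Set.Finite.mem_toFinset]

lemma levelFinset_zero : T.levelFinset 0 = {T.root} := by
  ext v
  simp only [mem_levelFinset, Finset.mem_singleton]
  constructor
  · exact T.root_of_level_zero v
  · rintro rfl; exact T.level_root

lemma level_parent_iterate : ∀ (m : ℕ) (v : T.V), m ≤ T.level v →
    T.level (T.parent^[m] v) + m = T.level v := by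
  intro m
  induction m with
  | zero => intro v _; simp
  | succ m ih =>
    intro v hv
    have hvroot : v ≠ T.root := by
      intro h; rw [h, T.level_root] at hv; omega
    have hp := T.level_parent v hvroot
    rw [Function.iterate_succ_apply]
    have : m ≤ T.level (T.parent v) := by omega
    have := ih (T.parent v) this
    omega

lemma mem_nChildrenFinset {m : ℕ} {v w : T.V} :
    w ∈ T.nChildrenFinset m v ↔ T.level w = T.level v + m ∧ T.parent^[m] w = v := by
  simp only [nChildrenFinset, Finset.mem_filter, mem_levelFinset]

lemma nChildrenFinset_zero (v : T.V) : T.nChildrenFinset 0 v = {v} := by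
  ext w
  simp only [mem_nChildrenFinset, Function.iterate_zero_apply, Finset.mem_singleton, add_zero]
  constructor
  · rintro ⟨_, rfl⟩; rfl
  · rintro rfl; exact ⟨rfl, rfl⟩

lemma nChildren_disj (m : ℕ) {v v' : T.V} (h : v ≠ v') :
    Disjoint (T.nChildrenFinset m v) (T.nChildrenFinset m v') := by
  rw [Finset.disjoint_left]
  intro w hw hw'
  rw [mem_nChildrenFinset] at hw hw'
  exact h (hw.2 ▸ hw'.2)

lemma levelFinset_add (n m : ℕ) :
    T.levelFinset (n + m) = (T.levelFinset n).biUnion (T.nChildrenFinset m) := by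
  ext w
  simp only [Finset.mem_biUnion, mem_levelFinset, mem_nChildrenFinset]
  constructor
  · intro hw
    have hm : m ≤ T.level w := by omega
    have := T.level_parent_iterate m w hm
    exact ⟨T.parent^[m] w, by omega, by omega, rfl⟩
  · rintro ⟨v, hv, hw, rfl⟩
    omega

lemma nChildrenFinset_succ (m : ℕ) (v : T.V) :
    T.nChildrenFinset (m + 1) v = (T.nChildrenFinset m v).biUnion T.childrenFinset := by
  ext u
  simp only [Finset.mem_biUnion, mem_nChildrenFinset, childrenFinset]
  constructor
  · intro hu
    have huroot : u ≠ T.root := by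
      intro h
      have := T.level_root
      rw [h] at hu
      omega
    have hpl := T.level_parent u huroot
    refine ⟨T.parent u, ⟨by omega, ?_⟩, by omega, rfl⟩
    rw [← Function.iterate_succ_apply]
    exact hu.2
  · rintro ⟨w, ⟨hw1, hw2⟩, hu1, rfl⟩
    constructor
    · omega
    · rw [Function.iterate_succ_apply]
      exact hw2

lemma B_iterate (m : ℕ) (f : T.V → ℂ) (v : T.V) :
    T.B^[m] f v = ∑ w ∈ T.nChildrenFinset m v, f w := by
  induction m generalizing f v with
  | zero => simp [nChildrenFinset_zero]
  | succ m ih =>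
    rw [Function.iterate_succ_apply, ih, nChildrenFinset_succ]
    rw [Finset.sum_biUnion]
    · rfl
    · intro a ha b hb hab
      exact T.nChildren_disj 1 hab

lemma sum_levels (n m : ℕ) (g : T.V → ℝ) :
    ∑ v ∈ T.levelFinset n, ∑ w ∈ T.nChildrenFinset m v, g w
      = ∑ w ∈ T.levelFinset (n + m), g w := by
  rw [levelFinset_add, Finset.sum_biUnion]
  intro a ha b hb hab
  exact T.nChildren_disj m hab

end HTree
namespace HTree

variable (T : HTree)

lemma numNChildren_eq (s : ℕ → ℕ)
    (hreg : ∀ v : T.V, T.numChildren v = s (T.level v + 1)) (m : ℕ) (v : T.V) :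
    T.numNChildren m v = ∏ k ∈ Finset.range m, s (T.level v + k + 1) := by
  induction m generalizing v with
  | zero => simp [numNChildren, nChildrenFinset_zero]
  | succ m ih =>
    have hcard : ((T.nChildrenFinset m v).biUnion T.childrenFinset).card
        = ∑ w ∈ T.nChildrenFinset m v, (T.childrenFinset w).card :=
      Finset.card_biUnion (fun a _ b _ hab => T.nChildren_disj 1 hab)
    rw [numNChildren, nChildrenFinset_succ, hcard]
    have : ∀ w ∈ T.nChildrenFinset m v, (T.childrenFinset w).card = s (T.level v + m + 1) := by
      intro w hw
      have h1 : (T.childrenFinset w).card = s (T.level w + 1) := hreg w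
      rw [h1, (T.mem_nChildrenFinset.mp hw).1]
    rw [Finset.sum_congr rfl this, Finset.sum_const, smul_eq_mul, Finset.prod_range_succ,
      ← numNChildren, ih]

lemma gamma_pos (n : ℕ) : 0 < T.gamma n :=
  Finset.card_pos.mpr ⟨(T.nonempty_level n).some, T.mem_levelFinset.mpr (T.nonempty_level n).some_mem⟩

lemma gamma_eq (s : ℕ → ℕ)
    (hreg : ∀ v : T.V, T.numChildren v = s (T.level v + 1)) (n : ℕ) :
    T.gamma n = ∏ k ∈ Finset.range n, s (k + 1) := by
  have : T.levelFinset n = T.nChildrenFinset n T.root := by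
    have := T.levelFinset_add 0 n
    rw [zero_add, T.levelFinset_zero] at this
    rw [this, Finset.singleton_biUnion]
  rw [gamma, this, ← numNChildren, T.numNChildren_eq s hreg, T.level_root]
  simp

end HTree
lemma jensen_aux {ι : Type*} (F : Finset ι) (g : ι → ℝ) (hg : ∀ i ∈ F, 0 ≤ g i)
    {p : ℝ} (hp : 1 ≤ p) (hF : 0 < F.card) :
    (∑ i ∈ F, g i) ^ p ≤ (F.card : ℝ) ^ (p - 1) * ∑ i ∈ F, g i ^ p := by
  set c : ℝ := (F.card : ℝ) with hc
  have hc0 : 0 < c := by rw [hc]; exact_mod_cast hF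
  have hs1 : ∑ _i ∈ F, c⁻¹ = 1 := by
    rw [Finset.sum_const, nsmul_eq_mul, ← hc, mul_inv_cancel₀ hc0.ne']
  have h := Real.rpow_arith_mean_le_arith_mean_rpow F (fun _ => c⁻¹) g
    (fun i _ => by positivity) hs1 hg hp
  rw [← Finset.mul_sum, ← Finset.mul_sum,
    Real.mul_rpow (by positivity) (Finset.sum_nonneg hg)] at h
  have hS : 0 ≤ ∑ i ∈ F, g i ^ p :=
    Finset.sum_nonneg fun i hi => Real.rpow_nonneg (hg i hi) p
  calc (∑ i ∈ F, g i) ^ p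
      = c ^ p * (c⁻¹ ^ p * (∑ i ∈ F, g i) ^ p) := by
        rw [← mul_assoc, ← Real.mul_rpow hc0.le (by positivity),
          mul_inv_cancel₀ hc0.ne', Real.one_rpow, one_mul]
    _ ≤ c ^ p * (c⁻¹ * ∑ i ∈ F, g i ^ p) :=
        mul_le_mul_of_nonneg_left h (Real.rpow_nonneg hc0.le p)
    _ = c ^ (p - 1) * ∑ i ∈ F, g i ^ p := by
        rw [← mul_assoc, Real.rpow_sub hc0, Real.rpow_one, div_eq_mul_inv]

namespace HTree

variable (T : HTree)

lemma Mpp_nonneg (p : ℝ) (f : T.V → ℂ) (n : ℕ) : 0 ≤ T.Mpp p f n := by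
  apply mul_nonneg (by positivity)
  exact Finset.sum_nonneg fun v _ => Real.rpow_nonneg (norm_nonneg _) p

lemma Mp_nonneg (p : ℝ) (f : T.V → ℂ) (n : ℕ) : 0 ≤ T.Mp p f n :=
  Real.rpow_nonneg (T.Mpp_nonneg p f n) _

lemma Mp_of_const {p : ℝ} (hp : 1 ≤ p) {f : T.V → ℂ} {n : ℕ} {c : ℝ} (hc : 0 ≤ c)
    (h : ∀ v ∈ T.levelFinset n, ‖f v‖ = c) : T.Mp p f n = c := by
  have hp0 : p ≠ 0 := by linarith
  have hγ : (0:ℝ) < (T.gamma n : ℝ) := by exact_mod_cast T.gamma_pos n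
  have h1 : T.Mpp p f n = c ^ p := by
    rw [Mpp, Finset.sum_congr rfl (fun v hv => by rw [h v hv]), Finset.sum_const,
      nsmul_eq_mul]
    show (1 / (T.gamma n : ℝ)) * ((T.gamma n : ℝ) * c ^ p) = c ^ p
    field_simp
  rw [Mp, h1, ← Real.rpow_mul hc, mul_one_div_cancel hp0, Real.rpow_one]

end HTree
namespace HTree

variable (T : HTree)

lemma Mp_B_iterate_le {p : ℝ} (hp : 1 ≤ p) (s : ℕ → ℕ) (hpos : ∀ n, 0 < s n)
    (hreg : ∀ v : T.V, T.numChildren v = s (T.level v + 1))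
    (m n : ℕ) (f : T.V → ℂ) :
    T.Mp p (T.B^[m] f) n ≤ (↑(∏ k ∈ Finset.range m, s (n + k + 1)) : ℝ) * T.Mp p f (n + m) := by
  have hp0 : p ≠ 0 := by linarith
  set κ : ℕ := ∏ k ∈ Finset.range m, s (n + k + 1) with hκdef
  have hκpos : 0 < κ := Finset.prod_pos fun k _ => hpos _
  have hκ : (0:ℝ) < (κ : ℝ) := by exact_mod_cast hκpos
  have hγn : (0:ℝ) < (T.gamma n : ℝ) := by exact_mod_cast T.gamma_pos n
  have hγadd : T.gamma (n + m) = T.gamma n * κ := by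
    rw [T.gamma_eq s hreg, T.gamma_eq s hreg, hκdef, Finset.prod_range_add]
  have hpt : ∀ v ∈ T.levelFinset n,
      ‖T.B^[m] f v‖ ^ p ≤ (κ : ℝ) ^ (p - 1) * ∑ w ∈ T.nChildrenFinset m v, ‖f w‖ ^ p := by
    intro v hv
    have hlv : T.level v = n := T.mem_levelFinset.mp hv
    have hcard : (T.nChildrenFinset m v).card = κ := by
      rw [← numNChildren, T.numNChildren_eq s hreg, hlv]
    have h1 : ‖T.B^[m] f v‖ ≤ ∑ w ∈ T.nChildrenFinset m v, ‖f w‖ := by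
      rw [T.B_iterate]; exact norm_sum_le _ _
    have h2 : ‖T.B^[m] f v‖ ^ p ≤ (∑ w ∈ T.nChildrenFinset m v, ‖f w‖) ^ p :=
      Real.rpow_le_rpow (norm_nonneg _) h1 (by linarith)
    refine h2.trans ?_
    have := jensen_aux (T.nChildrenFinset m v) (fun w => ‖f w‖)
      (fun w _ => norm_nonneg _) hp (by rw [hcard]; exact hκpos)
    rwa [hcard] at this
  have hrk : (κ:ℝ) ^ (p-1) * (κ:ℝ) = (κ:ℝ) ^ p := by
    calc (κ:ℝ) ^ (p-1) * (κ:ℝ) = (κ:ℝ) ^ (p-1) * (κ:ℝ) ^ (1:ℝ) := by rw [Real.rpow_one]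
      _ = (κ:ℝ) ^ (p-1+1) := (Real.rpow_add hκ _ _).symm
      _ = (κ:ℝ) ^ p := by ring_nf
  have hMpp : T.Mpp p (T.B^[m] f) n ≤ (κ : ℝ) ^ p * T.Mpp p f (n + m) := by
    have hsum : ∑ v ∈ T.levelFinset n, ‖T.B^[m] f v‖ ^ p
        ≤ (κ : ℝ) ^ (p - 1) * ∑ w ∈ T.levelFinset (n + m), ‖f w‖ ^ p := by
      calc ∑ v ∈ T.levelFinset n, ‖T.B^[m] f v‖ ^ p
          ≤ ∑ v ∈ T.levelFinset n, (κ : ℝ) ^ (p - 1) * ∑ w ∈ T.nChildrenFinset m v, ‖f w‖ ^ p :=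
            Finset.sum_le_sum hpt
        _ = (κ : ℝ) ^ (p - 1) * ∑ w ∈ T.levelFinset (n + m), ‖f w‖ ^ p := by
            rw [← Finset.mul_sum, T.sum_levels]
    have hγnm : (T.gamma (n+m) : ℝ) = (T.gamma n : ℝ) * (κ : ℝ) := by exact_mod_cast hγadd
    have heq : (1/(T.gamma n:ℝ)) * ((κ:ℝ)^(p-1) * ∑ w ∈ T.levelFinset (n + m), ‖f w‖ ^ p)
        = (κ:ℝ) ^ p * ((1/(T.gamma (n+m):ℝ)) * ∑ w ∈ T.levelFinset (n + m), ‖f w‖ ^ p) := by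
      rw [hγnm, ← hrk]
      field_simp
    rw [Mpp, Mpp]
    calc (1/(T.gamma n:ℝ)) * ∑ v ∈ T.levelFinset n, ‖T.B^[m] f v‖ ^ p
        ≤ (1/(T.gamma n:ℝ)) * ((κ:ℝ)^(p-1) * ∑ w ∈ T.levelFinset (n + m), ‖f w‖ ^ p) :=
          mul_le_mul_of_nonneg_left hsum (by positivity)
      _ = (κ:ℝ) ^ p * ((1/(T.gamma (n+m):ℝ)) * ∑ w ∈ T.levelFinset (n + m), ‖f w‖ ^ p) := heq
  have hroot := Real.rpow_le_rpow (T.Mpp_nonneg p (T.B^[m] f) n) hMpp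
    (by positivity : (0:ℝ) ≤ 1/p)
  rw [Mp, Mp]
  refine hroot.trans (le_of_eq ?_)
  rw [Real.mul_rpow (by positivity) (T.Mpp_nonneg p f (n+m)), ← Real.rpow_mul hκ.le,
    mul_one_div_cancel hp0, Real.rpow_one]

end HTree
namespace HTree

variable (T : HTree)

lemma isLeast_opNorm {p : ℝ} (hp : 1 ≤ p) (s : ℕ → ℕ) (hpos : ∀ n, 0 < s n)
    (hbdd : ∃ M : ℕ, ∀ n, s n ≤ M)
    (hreg : ∀ v : T.V, T.numChildren v = s (T.level v + 1)) (m : ℕ) :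
    IsLeast {C : ℝ | 0 ≤ C ∧ ∀ f, T.MemHp p f →
        T.MemHp p (T.B^[m] f) ∧ T.Hnorm p (T.B^[m] f) ≤ C * T.Hnorm p f}
      (⨆ n : ℕ, (↑(∏ k ∈ Finset.range m, s (n + k + 1)) : ℝ)) := by
  obtain ⟨M, hM⟩ := hbdd
  set Kv : ℕ → ℝ := fun n => (↑(∏ k ∈ Finset.range m, s (n + k + 1)) : ℝ) with hKv
  have hKv1 : ∀ n, 1 ≤ Kv n := by
    intro n
    have : 1 ≤ ∏ k ∈ Finset.range m, s (n + k + 1) :=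
      Nat.one_le_iff_ne_zero.mpr (Finset.prod_ne_zero_iff.mpr fun k _ => (hpos _).ne')
    show (1:ℝ) ≤ ((∏ k ∈ Finset.range m, s (n + k + 1) : ℕ) : ℝ)
    exact_mod_cast this
  have hKvbdd : BddAbove (Set.range Kv) := by
    refine ⟨(M:ℝ)^m, ?_⟩
    rintro x ⟨n, rfl⟩
    have : ∏ k ∈ Finset.range m, s (n + k + 1) ≤ M ^ m := by
      calc ∏ k ∈ Finset.range m, s (n + k + 1) ≤ ∏ _k ∈ Finset.range m, M :=
            Finset.prod_le_prod (fun _ _ => Nat.zero_le _) (fun k _ => hM _)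
        _ = M ^ m := by rw [Finset.prod_const, Finset.card_range]
    calc Kv n = (↑(∏ k ∈ Finset.range m, s (n + k + 1)) : ℝ) := rfl
      _ ≤ ((M:ℕ)^m : ℝ) := by exact_mod_cast this
      _ = (M:ℝ)^m := by push_cast; ring
  set W : ℝ := ⨆ n : ℕ, Kv n with hW
  have hKvW : ∀ n, Kv n ≤ W := fun n => le_ciSup hKvbdd n
  have hW1 : 1 ≤ W := (hKv1 0).trans (hKvW 0)
  have hW0 : 0 ≤ W := by linarith
  constructor
  · refine ⟨hW0, fun f hf => ?_⟩
    obtain ⟨C, hC⟩ := hf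
    have hMpbdd : BddAbove (Set.range (T.Mp p f)) := ⟨C, by rintro x ⟨n, rfl⟩; exact hC n⟩
    have hMpHn : ∀ n, T.Mp p f n ≤ T.Hnorm p f := fun n => le_ciSup hMpbdd n
    have hHn0 : 0 ≤ T.Hnorm p f := (T.Mp_nonneg p f 0).trans (hMpHn 0)
    have key : ∀ n, T.Mp p (T.B^[m] f) n ≤ W * T.Hnorm p f := by
      intro n
      refine (T.Mp_B_iterate_le hp s hpos hreg m n f).trans ?_
      exact mul_le_mul (hKvW n) (hMpHn (n+m)) (T.Mp_nonneg p f (n+m)) hW0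
    exact ⟨⟨W * T.Hnorm p f, key⟩, ciSup_le key⟩
  · rintro C ⟨hC0, hC⟩
    set f₁ : T.V → ℂ := fun _ => 1 with hf₁
    have hMpf₁ : ∀ n, T.Mp p f₁ n = 1 := fun n =>
      T.Mp_of_const hp zero_le_one (fun v _ => by simp [hf₁])
    have hmem₁ : T.MemHp p f₁ := ⟨1, fun n => (hMpf₁ n).le⟩
    have hHnf₁ : T.Hnorm p f₁ = 1 := by
      rw [Hnorm]
      simp only [hMpf₁]
      exact ciSup_const
    have hMpB : ∀ n, T.Mp p (T.B^[m] f₁) n = Kv n := by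
      intro n
      refine T.Mp_of_const hp (by linarith [hKv1 n]) (fun v hv => ?_)
      have hlv : T.level v = n := T.mem_levelFinset.mp hv
      have hcard : (T.nChildrenFinset m v).card = ∏ k ∈ Finset.range m, s (n + k + 1) := by
        rw [← numNChildren, T.numNChildren_eq s hreg, hlv]
      have : T.B^[m] f₁ v = ((∏ k ∈ Finset.range m, s (n + k + 1) : ℕ) : ℂ) := by
        rw [T.B_iterate]
        simp only [hf₁, Finset.sum_const, nsmul_eq_mul, mul_one, hcard]
      rw [this]
      simp [hKv]
    have hHnB : T.Hnorm p (T.B^[m] f₁) = W := by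
      rw [Hnorm, hW]
      simp only [hMpB]
    have := (hC f₁ hmem₁).2
    rw [hHnB, hHnf₁, mul_one] at this
    exact this

end HTree
namespace HTree

variable (T : HTree)

lemma eigen_of_bdd {p : ℝ} (hp : 1 ≤ p) (s : ℕ → ℕ) (hpos : ∀ n, 0 < s n)
    (hreg : ∀ v : T.V, T.numChildren v = s (T.level v + 1)) (z : ℂ)
    (hz : BddAbove (Set.range fun n : ℕ =>
        ‖z‖ ^ n / ∏ k ∈ Finset.range n, (s (k + 1) : ℝ))) :
    ∃ f : T.V → ℂ, T.MemHp p f ∧ f ≠ 0 ∧ T.B f = fun v => z * f v := by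
  set f : T.V → ℂ := fun v => z ^ (T.level v) / (T.gamma (T.level v) : ℂ) with hf
  have hγpos : ∀ n, (0:ℝ) < (T.gamma n : ℝ) := fun n => by exact_mod_cast T.gamma_pos n
  have hγC : ∀ n, (T.gamma n : ℂ) ≠ 0 := fun n => by
    exact_mod_cast (Nat.cast_ne_zero (R := ℂ)).mpr (T.gamma_pos n).ne'
  have hγ0 : T.gamma 0 = 1 := by rw [gamma, T.levelFinset_zero, Finset.card_singleton]
  refine ⟨f, ?_, ?_, ?_⟩
  · -- MemHp
    obtain ⟨C, hC⟩ := hz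
    refine ⟨C, fun n => ?_⟩
    have hMp : T.Mp p f n = ‖z‖ ^ n / (T.gamma n : ℝ) := by
      refine T.Mp_of_const hp (by positivity) (fun v hv => ?_)
      have hlv : T.level v = n := T.mem_levelFinset.mp hv
      rw [hf]
      simp only [hlv, norm_div, norm_pow, Complex.norm_natCast]
    rw [hMp, T.gamma_eq s hreg]
    have : ((∏ k ∈ Finset.range n, s (k + 1) : ℕ) : ℝ) = ∏ k ∈ Finset.range n, (s (k + 1) : ℝ) := by
      push_cast; rfl
    rw [this]
    exact hC ⟨n, rfl⟩
  · -- f ≠ 0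
    intro h
    have := congrFun h T.root
    rw [hf] at this
    simp only [T.level_root, pow_zero, hγ0, Nat.cast_one, div_one, Pi.zero_apply] at this
    exact one_ne_zero this
  · -- eigenvector equation
    funext v
    set n := T.level v with hn
    have hγsucc : T.gamma (n + 1) = T.gamma n * s (n + 1) := by
      rw [T.gamma_eq s hreg, T.gamma_eq s hreg, Finset.prod_range_succ]
    have hlw : ∀ w ∈ T.childrenFinset v, f w = z ^ (n+1) / (T.gamma (n+1) : ℂ) := by
      intro w hw
      have : T.level w = n + 1 := by
        have := T.mem_nChildrenFinset.mp hw
        omega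
      rw [hf]; simp only [this]
    have hcard : (T.childrenFinset v).card = s (n + 1) := hreg v
    rw [B]
    rw [Finset.sum_congr rfl hlw, Finset.sum_const, hcard, nsmul_eq_mul]
    have hsC : ((s (n+1) : ℕ) : ℂ) ≠ 0 := by
      exact_mod_cast (Nat.cast_ne_zero (R := ℂ)).mpr (hpos (n+1)).ne'
    rw [hf]
    simp only [← hn]
    have hγsC : (T.gamma (n+1) : ℂ) = (T.gamma n : ℂ) * (s (n+1) : ℂ) := by
      exact_mod_cast hγsucc
    rw [hγsC]
    rw [div_mul_eq_div_div, mul_comm, div_mul_cancel₀ _ hsC, pow_succ,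
      mul_comm (z ^ n) z, mul_div_assoc]

end HTree
/-- for a tree with `γ(1,v) = s_{|v|+1}` for a bounded sequence of positive
integers `(s_n)`: `B` is bounded with `‖B‖ = sup_n s_n`; every `λ` with
`(λ^n/(s_1⋯s_n))_n` bounded is an eigenvalue on `H^p(T)`; `‖B^m‖ = sup_n s_{n+1}⋯s_{n+m}`
(whence the spectral-radius formula); and if `liminf (s_1⋯s_n)^{1/n} = sup_n s_n = t`,
the spectral radius is `t` and every `|λ| < t` is an eigenvalue. -/
theorem backward_shift_level_regular (T : HTree) (p : ℝ) (hp : 1 ≤ p)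
    (s : ℕ → ℕ) (hpos : ∀ n, 0 < s n) (hbdd : ∃ M : ℕ, ∀ n, s n ≤ M)
    (hreg : ∀ v : T.V, T.numChildren v = s (T.level v + 1)) :
    (T.BoundedOn T.B (T.MemHp p) p ∧
      T.opNorm T.B (T.MemHp p) p = ⨆ n : ℕ, (s (n + 1) : ℝ)) ∧
    (∀ z : ℂ,
      BddAbove (Set.range fun n : ℕ =>
        ‖z‖ ^ n / ∏ k ∈ Finset.range n, (s (k + 1) : ℝ)) →
      ∃ f : T.V → ℂ, T.MemHp p f ∧ f ≠ 0 ∧ T.B f = fun v => z * f v) ∧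
    (∀ m : ℕ, 1 ≤ m →
      T.opNorm ((T.B)^[m]) (T.MemHp p) p =
        ⨆ n : ℕ, ∏ k ∈ Finset.range m, (s (n + k + 1) : ℝ)) ∧
    (∀ t : ℝ,
      Filter.liminf
          (fun n : ℕ => (∏ k ∈ Finset.range n, (s (k + 1) : ℝ)) ^ ((1 : ℝ) / n))
          Filter.atTop = t →
      (⨆ n : ℕ, (s (n + 1) : ℝ)) = t →
      (Filter.Tendsto
          (fun m : ℕ => (T.opNorm ((T.B)^[m]) (T.MemHp p) p) ^ ((1 : ℝ) / m))
          Filter.atTop (nhds t) ∧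
        ∀ z : ℂ, ‖z‖ < t →
          ∃ f : T.V → ℂ, T.MemHp p f ∧ f ≠ 0 ∧ T.B f = fun v => z * f v)) := by
  obtain ⟨M, hM⟩ := hbdd
  have hM1 : 1 ≤ M := le_trans (hpos 0) (hM 0)
  have hop : ∀ m : ℕ, T.opNorm ((T.B)^[m]) (T.MemHp p) p
      = ⨆ n : ℕ, (↑(∏ k ∈ Finset.range m, s (n + k + 1)) : ℝ) := fun m =>
    (T.isLeast_opNorm hp s hpos ⟨M, hM⟩ hreg m).csInf_eq
  -- the real product sequence
  set P : ℕ → ℝ := fun n => ∏ k ∈ Finset.range n, (s (k + 1) : ℝ) with hP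
  have hPcast : ∀ n, P n = (↑(∏ k ∈ Finset.range n, s (k + 1)) : ℝ) := fun n => by
    rw [hP, Nat.cast_prod]
  have hP1 : ∀ n, 1 ≤ P n := by
    intro n
    rw [hPcast]
    have : 1 ≤ ∏ k ∈ Finset.range n, s (k + 1) :=
      Nat.one_le_iff_ne_zero.mpr (Finset.prod_ne_zero_iff.mpr fun k _ => (hpos _).ne')
    exact_mod_cast this
  have hPpos : ∀ n, (0:ℝ) < P n := fun n => lt_of_lt_of_le one_pos (hP1 n)
  refine ⟨⟨?_, ?_⟩, ?_, ?_, ?_⟩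
  · -- BoundedOn
    have h1 := (T.isLeast_opNorm hp s hpos ⟨M, hM⟩ hreg 1).1
    simp only [Function.iterate_one] at h1
    exact ⟨_, h1.1, h1.2⟩
  · -- opNorm of B
    rw [show T.B = (T.B)^[1] from (Function.iterate_one T.B).symm, hop 1]
    simp [Finset.prod_range_one]
  · -- eigenvalues
    intro z hz
    exact T.eigen_of_bdd hp s hpos hreg z hz
  · -- opNorm of B^[m]
    intro m _
    rw [hop m]
    simp only [Nat.cast_prod]
  · -- spectral radius
    intro t hliminf hsup
    have hsbdd : BddAbove (Set.range fun n : ℕ => (s (n + 1) : ℝ)) := by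
      refine ⟨(M:ℝ), ?_⟩
      rintro x ⟨n, rfl⟩
      show ((s (n+1) : ℕ) : ℝ) ≤ (M:ℝ)
      exact_mod_cast hM (n+1)
    have hst : ∀ n, (s (n + 1) : ℝ) ≤ t := by
      intro n
      rw [← hsup]
      exact le_ciSup hsbdd n
    have ht1 : (1:ℝ) ≤ t := le_trans (by exact_mod_cast hpos 1) (hst 0)
    have ht0 : (0:ℝ) < t := lt_of_lt_of_le one_pos ht1
    -- the sequences
    set u : ℕ → ℝ := fun n => P n ^ ((1:ℝ) / n) with hu
    set W : ℕ → ℝ := fun m => ⨆ n : ℕ, (↑(∏ k ∈ Finset.range m, s (n + k + 1)) : ℝ) with hW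
    set g : ℕ → ℝ := fun m => W m ^ ((1:ℝ) / m) with hg
    have hWle : ∀ m, W m ≤ t ^ m := by
      intro m
      refine ciSup_le fun n => ?_
      show (↑(∏ k ∈ Finset.range m, s (n + k + 1)) : ℝ) ≤ t ^ m
      rw [Nat.cast_prod]
      calc ∏ k ∈ Finset.range m, (s (n + k + 1) : ℝ)
          ≤ ∏ _k ∈ Finset.range m, t :=
            Finset.prod_le_prod (fun k _ => by positivity) (fun k _ => hst (n + k))
        _ = t ^ m := by rw [Finset.prod_const, Finset.card_range]
    have hWge : ∀ m, P m ≤ W m := by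
      intro m
      have hb : BddAbove (Set.range fun n : ℕ =>
          (↑(∏ k ∈ Finset.range m, s (n + k + 1)) : ℝ)) := by
        refine ⟨t ^ m, ?_⟩
        rintro x ⟨n, rfl⟩
        show (↑(∏ k ∈ Finset.range m, s (n + k + 1)) : ℝ) ≤ t ^ m
        rw [Nat.cast_prod]
        calc ∏ k ∈ Finset.range m, (s (n + k + 1) : ℝ)
            ≤ ∏ _k ∈ Finset.range m, t :=
              Finset.prod_le_prod (fun k _ => by positivity) (fun k _ => hst (n + k))
          _ = t ^ m := by rw [Finset.prod_const, Finset.card_range]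
      have h0 := le_ciSup hb 0
      have : (↑(∏ k ∈ Finset.range m, s (0 + k + 1)) : ℝ) = P m := by
        rw [hPcast]
        congr 1
        exact Finset.prod_congr rfl fun k _ => by rw [zero_add]
      rw [this] at h0
      exact h0
    have hWpos : ∀ m, (0:ℝ) < W m := fun m => lt_of_lt_of_le (hPpos m) (hWge m)
    have hule : ∀ n, u n ≤ g n := fun n =>
      Real.rpow_le_rpow (hPpos n).le (hWge n) (by positivity)
    have hgle : ∀ m, g m ≤ t := by
      intro m
      rcases Nat.eq_zero_or_pos m with hm | hm
      · subst hm
        simp only [hg, Nat.cast_zero, div_zero, Real.rpow_zero]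
        linarith
      · have hm0 : ((m:ℕ):ℝ) ≠ 0 := by
          exact_mod_cast hm.ne'
        calc g m ≤ (t ^ m) ^ ((1:ℝ)/m) :=
              Real.rpow_le_rpow (hWpos m).le (hWle m) (by positivity)
          _ = t := by
              rw [← Real.rpow_natCast t m, ← Real.rpow_mul ht0.le,
                mul_one_div_cancel hm0, Real.rpow_one]
    have huge0 : ∀ n, 0 ≤ u n := fun n => Real.rpow_nonneg (hPpos n).le _
    have hgge0 : ∀ n, 0 ≤ g n := fun n => Real.rpow_nonneg (hWpos n).le _
    have huleM : ∀ n, u n ≤ (M:ℝ) := by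
      intro n
      rcases Nat.eq_zero_or_pos n with hn | hn
      · subst hn
        simp only [hu, Nat.cast_zero, div_zero, Real.rpow_zero]
        exact_mod_cast hM1
      · have hn0 : ((n:ℕ):ℝ) ≠ 0 := by exact_mod_cast hn.ne'
        have hPM : P n ≤ (M:ℝ) ^ n := by
          rw [hP]
          calc ∏ k ∈ Finset.range n, (s (k + 1) : ℝ)
              ≤ ∏ _k ∈ Finset.range n, (M:ℝ) :=
                Finset.prod_le_prod (fun k _ => by positivity)
                  (fun k _ => by exact_mod_cast hM (k+1))
            _ = (M:ℝ) ^ n := by rw [Finset.prod_const, Finset.card_range]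
        calc u n ≤ ((M:ℝ) ^ n) ^ ((1:ℝ)/n) :=
              Real.rpow_le_rpow (hPpos n).le hPM (by positivity)
          _ = (M:ℝ) := by
              rw [← Real.rpow_natCast (M:ℝ) n, ← Real.rpow_mul (by positivity),
                mul_one_div_cancel hn0, Real.rpow_one]
    -- boundedness facts
    have hbu_le : Filter.IsBoundedUnder (· ≤ ·) Filter.atTop u :=
      ⟨(M:ℝ), Filter.eventually_map.mpr (Filter.Eventually.of_forall huleM)⟩
    have hbu_ge : Filter.IsBoundedUnder (· ≥ ·) Filter.atTop u :=
      ⟨0, Filter.eventually_map.mpr (Filter.Eventually.of_forall huge0)⟩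
    have hbg_le : Filter.IsBoundedUnder (· ≤ ·) Filter.atTop g :=
      ⟨t, Filter.eventually_map.mpr (Filter.Eventually.of_forall hgle)⟩
    have hbg_ge : Filter.IsBoundedUnder (· ≥ ·) Filter.atTop g :=
      ⟨0, Filter.eventually_map.mpr (Filter.Eventually.of_forall hgge0)⟩
    constructor
    · -- the limit
      have h1 : t ≤ Filter.liminf g Filter.atTop := by
        rw [← hliminf]
        exact Filter.liminf_le_liminf (Filter.Eventually.of_forall hule) hbu_ge
          hbg_le.isCoboundedUnder_ge
      have h2 : Filter.limsup g Filter.atTop ≤ t :=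
        Filter.limsup_le_of_le hbg_ge.isCoboundedUnder_le
          (Filter.Eventually.of_forall hgle)
      have h3 : Filter.Tendsto g Filter.atTop (nhds t) :=
        tendsto_of_le_liminf_of_limsup_le h1 h2 hbg_le hbg_ge
      have heq : (fun m : ℕ => (T.opNorm ((T.B)^[m]) (T.MemHp p) p) ^ ((1 : ℝ) / m)) = g := by
        funext m
        rw [hop m]
      rw [heq]
      exact h3
    · -- eigenvalues in the disk
      intro z hzt
      set a : ℝ := (‖z‖ + t) / 2 with ha
      have ha1 : ‖z‖ < a := by rw [ha]; linarith
      have ha2 : a < t := by rw [ha]; linarith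
      have ha0 : 0 < a := lt_of_le_of_lt (norm_nonneg z) ha1
      have hev : ∀ᶠ n in Filter.atTop, a < u n := by
        apply Filter.eventually_lt_of_lt_liminf _ hbu_ge
        rw [hliminf]
        exact ha2
      obtain ⟨N, hN⟩ := Filter.eventually_atTop.mp hev
      have key : ∀ n, N + 1 ≤ n → ‖z‖ ^ n / P n ≤ 1 := by
        intro n hn
        have hn1 : 1 ≤ n := le_trans (Nat.le_add_left 1 N) hn
        have hn0 : ((n:ℕ):ℝ) ≠ 0 := by
          have : 0 < n := hn1
          exact_mod_cast this.ne'
        have hau := hN n (le_trans (Nat.le_succ N) hn)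
        have hPn : a ^ n ≤ P n := by
          have h1 : a ^ ((n:ℕ):ℝ) ≤ (P n ^ ((1:ℝ)/n)) ^ ((n:ℕ):ℝ) :=
            Real.rpow_le_rpow ha0.le hau.le (by positivity)
          rw [← Real.rpow_natCast a n]
          rw [← Real.rpow_mul (hPpos n).le, one_div_mul_cancel hn0, Real.rpow_one] at h1
          exact h1
        have hzn : ‖z‖ ^ n ≤ a ^ n := pow_le_pow_left₀ (norm_nonneg z) ha1.le n
        rw [div_le_one (hPpos n)]
        exact le_trans hzn hPn
      have hbddz : BddAbove (Set.range fun n : ℕ =>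
          ‖z‖ ^ n / ∏ k ∈ Finset.range n, (s (k + 1) : ℝ)) := by
        refine ⟨1 + ∑ k ∈ Finset.range (N + 1), ‖z‖ ^ k / P k, ?_⟩
        rintro x ⟨n, rfl⟩
        have hterm : ∀ k, 0 ≤ ‖z‖ ^ k / P k := fun k => by positivity
        have hsum0 : 0 ≤ ∑ k ∈ Finset.range (N + 1), ‖z‖ ^ k / P k :=
          Finset.sum_nonneg fun k _ => hterm k
        show ‖z‖ ^ n / P n ≤ 1 + ∑ k ∈ Finset.range (N + 1), ‖z‖ ^ k / P k
        rcases lt_or_ge n (N + 1) with hn | hn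
        · have := Finset.single_le_sum (fun k _ => hterm k) (Finset.mem_range.mpr hn)
          linarith
        · have := key n hn
          linarith
      exact T.eigen_of_bdd hp s hpos hreg z hbddz
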